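/- Let M be a complete metric space, let (φ_j)_{j∈ω} be a sequence of uniformly continuous functions from M to [0,1], and let D be a dense subset of M. Then there exists a point a ∈ M with φ_j(a) = 0 for all j if and only if there exists a sequence (x_n)_{n∈ω} of elements of D such that d(x_n, x_{n+1}) ≤ 2^{−n} for all n and φ_j(x_n) ≤ 1/(n+1) for all j ≤ n. -/
import Mathlib


/-- In a complete metric space `M` with dense subset `D`, a sequence
`(φ_j)` of uniformly continuous `[0,1]`-valued functions has a common zero if
and only if there is a sequence `(x_n)` in `D` with `d(x_n, x_{n+1}) ≤ 2^{-n}`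
and `φ_j(x_n) ≤ 1/(n+1)` for all `j ≤ n`. -/
theorem common_zero_iff_approx_seq {M : Type*} [MetricSpace M] [CompleteSpace M]
    (φ : ℕ → M → ℝ) (hrange : ∀ j x, φ j x ∈ Set.Icc (0 : ℝ) 1)
    (huc : ∀ j, UniformContinuous (φ j))
    (D : Set M) (hD : Dense D) :
    (∃ a : M, ∀ j, φ j a = 0) ↔
      ∃ x : ℕ → M, (∀ n, x n ∈ D) ∧
        (∀ n, dist (x n) (x (n + 1)) ≤ (1 / 2) ^ n) ∧
        (∀ n, ∀ j ≤ n, φ j (x n) ≤ 1 / (n + 1)) := by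
  constructor
  · rintro ⟨a, ha⟩
    have key : ∀ n : ℕ, ∃ y, y ∈ D ∧ dist y a < (1/2)^(n+1) ∧
        ∀ j ≤ n, φ j y ≤ 1/(n+1) := by
      intro n
      have hev : ∀ᶠ y in nhds a,
          dist y a < (1/2)^(n+1) ∧ ∀ j ∈ Finset.range (n+1), φ j y ≤ 1/(n+1) := by
        apply Filter.Eventually.and
        · exact Metric.eventually_nhds_iff_ball.mpr
            ⟨(1/2)^(n+1), by positivity, fun y hy => by
              simpa [Metric.mem_ball] using hy⟩
        · rw [Filter.eventually_all_finset]
          intro j _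
          have hcont : Filter.Tendsto (φ j) (nhds a) (nhds (φ j a)) :=
            (huc j).continuous.tendsto a
          have : ∀ᶠ y in nhds a, φ j y < 1/(n+1) := by
            apply hcont.eventually_lt_const
            rw [ha j]
            positivity
          exact this.mono fun y hy => le_of_lt hy
      obtain ⟨y, hy1, hy2⟩ := mem_closure_iff_nhds.mp (hD a) _ hev
      exact ⟨y, hy2, hy1.1, fun j hj => hy1.2 j (Finset.mem_range.mpr (Nat.lt_succ_of_le hj))⟩
    choose x hxD hxd hxφ using key
    refine ⟨x, hxD, fun n => ?_, fun n j hj => hxφ n j hj⟩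
    calc dist (x n) (x (n+1)) ≤ dist (x n) a + dist (x (n+1)) a := dist_triangle_right _ _ _
      _ ≤ (1/2)^(n+1) + (1/2)^(n+2) := add_le_add (hxd n).le (hxd (n+1)).le
      _ ≤ (1/2)^n := by
          have : (0:ℝ) < (1/2)^n := by positivity
          ring_nf
          nlinarith [this]
  · rintro ⟨x, hxD, hxd, hxφ⟩
    have hc : CauchySeq x :=
      cauchySeq_of_le_geometric (1/2) 1 (by norm_num)
        (fun n => by simpa using hxd n)
    obtain ⟨a, ha⟩ := cauchySeq_tendsto_of_complete hc
    refine ⟨a, fun j => ?_⟩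
    have h1 : Filter.Tendsto (fun n => φ j (x n)) Filter.atTop (nhds (φ j a)) :=
      ((huc j).continuous.tendsto a).comp ha
    have h2 : Filter.Tendsto (fun n : ℕ => 1/((n:ℝ)+1)) Filter.atTop (nhds 0) :=
      tendsto_one_div_add_atTop_nhds_zero_nat
    have hle : φ j a ≤ 0 := by
      apply le_of_tendsto_of_tendsto h1 h2
      filter_upwards [Filter.eventually_ge_atTop j] with n hn
      exact_mod_cast hxφ n j hn
    exact le_antisymm hle (hrange j a).1
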